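/- Let (X,d) be a metric space, ε ∈ (0,1/3), r, g ∈ X, n ∈ ℕ, and f : X → ℝ multiplicatively ε-accurate with respect to g, i.e. (1−ε)·d(v,g) ≤ f(v) ≤ (1+ε)·d(v,g) for all v ∈ X. Let T ≤ n, let v_0, v_1, …, v_T ∈ X be pairwise distinct with v_0 = r and v_T = g, and let w_1, …, w_T, r_1, …, r_T ∈ X and step costs c_1, …, c_T ∈ ℝ satisfy, for every i ∈ {1,…,T}: (a) d(v_{i−1}, g) = d(v_{i−1}, w_i) + d(w_i, g); (b) c_i ≥ d(v_{i−1}, v_i); (c) (2/3)·c_i + f(v_i) ≤ (2/3)·d(v_{i−1}, w_i) + f(w_i); (d) d(r_i, g) ≤ d(r,g); and (e) (2/3)·c_i + f(v_i) ≤ (2/3)·d(v_{i−1}, r_i) + f(r_i). Then Σ_{i=1}^T c_i ≤ (2 + 6ε/(1−3ε) + 6nε(5+3ε)/(1−3ε)²)·d(r,g). -/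

import Mathlib

/-- Trajectory form of Theorem 3 (exploration with unknown relative error `ε < 1/3`,
Algorithm 3 with `β = 2/3`): `ALG ≤ (2 + 6ε/(1-3ε) + 6nε(5+3ε)/(1-3ε)²) · OPT`. -/
theorem relative_error_unknown_eps
    {X : Type*} [MetricSpace X] (ε : ℝ) (hε0 : 0 < ε) (hε1 : ε < 1 / 3)
    (r g : X) (n : ℕ) (f : X → ℝ)
    (hf : ∀ v : X, (1 - ε) * dist v g ≤ f v ∧ f v ≤ (1 + ε) * dist v g)
    (T : ℕ) (hT : T ≤ n) (v : Fin (T + 1) → X) (hv : Function.Injective v)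
    (hv0 : v 0 = r) (hvT : v (Fin.last T) = g)
    (w rr : Fin T → X) (c : Fin T → ℝ)
    (ha : ∀ i : Fin T, dist (v i.castSucc) g = dist (v i.castSucc) (w i) + dist (w i) g)
    (hb : ∀ i : Fin T, dist (v i.castSucc) (v i.succ) ≤ c i)
    (hc : ∀ i : Fin T,
      (2 / 3 : ℝ) * c i + f (v i.succ) ≤ (2 / 3 : ℝ) * dist (v i.castSucc) (w i) + f (w i))
    (hd : ∀ i : Fin T, dist (rr i) g ≤ dist r g)
    (he : ∀ i : Fin T,
      (2 / 3 : ℝ) * c i + f (v i.succ) ≤ (2 / 3 : ℝ) * dist (v i.castSucc) (rr i) + f (rr i)) :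
    ∑ i, c i ≤
      (2 + 6 * ε / (1 - 3 * ε) + 6 * n * ε * (5 + 3 * ε) / (1 - 3 * ε) ^ 2) * dist r g := by
  have h3 : (0:ℝ) < 1 - 3 * ε := by linarith
  set OPT := dist r g with hOPTdef
  have hOPT : 0 ≤ OPT := dist_nonneg
  set M : ℝ := (5 + 3 * ε) / (1 - 3 * ε) with hMdef
  have hM1 : (1:ℝ) ≤ M := by
    rw [hMdef, le_div_iff₀ h3]; linarith
  -- Lemma B: every visited successor is within M·OPT of g
  have hB : ∀ i : Fin T, dist (v i.succ) g ≤ M * OPT := by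
    intro i
    have h1 := (hf (v i.succ)).1
    have h2 := (hf (rr i)).2
    have htr1 : dist (v i.castSucc) (rr i) ≤ dist (v i.castSucc) g + dist (rr i) g := by
      have := dist_triangle (v i.castSucc) g (rr i)
      rw [dist_comm (rr i) g]; linarith [this]
    have htr2 : dist (v i.castSucc) g ≤ dist (v i.castSucc) (v i.succ) + dist (v i.succ) g :=
      dist_triangle _ _ _
    have hbd := hd i
    have hbi := hb i
    have hei := he i
    have key : (1 - 3 * ε) * dist (v i.succ) g ≤ (5 + 3 * ε) * OPT := by nlinarith
    rw [hMdef, div_mul_eq_mul_div, le_div_iff₀ h3]; nlinarith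
  -- Lemma A: per-step cost bound
  have hA : ∀ i : Fin T, c i ≤
      (3/2) * ((1 + ε) * dist (v i.castSucc) g - (1 - ε) * dist (v i.succ) g) := by
    intro i
    have h1 := (hf (v i.succ)).1
    have h2 := (hf (w i)).2
    have hai := ha i
    have hci := hc i
    have hwg : dist (w i) g ≤ dist (v i.castSucc) g := by
      have := dist_nonneg (x := v i.castSucc) (y := w i); linarith
    nlinarith [mul_nonneg hε0.le (sub_nonneg.2 hwg)]
  -- ℕ-indexed distance to goal
  set D : ℕ → ℝ := fun k => dist (v ⟨min k T, by omega⟩) g with hDdef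
  have hD0 : D 0 = OPT := by
    have : (⟨min 0 T, by omega⟩ : Fin (T+1)) = 0 := by ext; simp
    simp [hDdef, this, hv0, hOPTdef]
  have hDT : D T = 0 := by
    have hidx : (⟨min T T, by omega⟩ : Fin (T+1)) = Fin.last T := by ext; simp
    simp only [hDdef]
    rw [hidx, hvT, dist_self]
  have hDcast : ∀ i : Fin T, D i.1 = dist (v i.castSucc) g := by
    intro i
    have hidx : (⟨min i.1 T, by omega⟩ : Fin (T+1)) = i.castSucc := by
      ext; simp [Nat.min_eq_left i.2.le]
    simp only [hDdef]
    rw [hidx]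
  have hDsucc : ∀ i : Fin T, D (i.1 + 1) = dist (v i.succ) g := by
    intro i
    have hidx : (⟨min (i.1+1) T, by omega⟩ : Fin (T+1)) = i.succ := by
      ext; simp [Nat.min_eq_left i.2]
    simp only [hDdef]
    rw [hidx]
  -- each D k, k < T, is at most M·OPT
  have hDM : ∀ k, k < T → D k ≤ M * OPT := by
    intro k hk
    rcases Nat.eq_zero_or_pos k with h0 | hpos
    · subst h0; rw [hD0]
      calc OPT = 1 * OPT := (one_mul _).symm
        _ ≤ M * OPT := mul_le_mul_of_nonneg_right hM1 hOPT
    · have hk1 : k - 1 < T := by omega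
      have : D k = dist (v (⟨k-1, hk1⟩ : Fin T).succ) g := by
        have := hDsucc ⟨k-1, hk1⟩
        simpa [Nat.sub_add_cancel hpos] using this
      rw [this]; exact hB _
  -- sum bound
  have hsum : ∑ i, c i ≤ (3/2) * (1 - ε) * (D 0 - D T) + 3 * ε * (T * (M * OPT)) := by
    calc ∑ i : Fin T, c i
        ≤ ∑ i : Fin T, ((3/2) * (1 - ε) * (D i.1 - D (i.1 + 1)) + 3 * ε * D i.1) := by
          apply Finset.sum_le_sum
          intro i _
          have := hA i
          rw [hDcast i, hDsucc i]
          linarith [hA i]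
      _ = ∑ k ∈ Finset.range T, ((3/2) * (1 - ε) * (D k - D (k + 1)) + 3 * ε * D k) := by
          exact Fin.sum_univ_eq_sum_range (fun k => (3/2) * (1 - ε) * (D k - D (k + 1)) + 3 * ε * D k) T
      _ = (3/2) * (1 - ε) * (∑ k ∈ Finset.range T, (D k - D (k+1)))
            + 3 * ε * ∑ k ∈ Finset.range T, D k := by
          rw [Finset.sum_add_distrib, ← Finset.mul_sum, ← Finset.mul_sum]
      _ ≤ (3/2) * (1 - ε) * (D 0 - D T) + 3 * ε * (T * (M * OPT)) := by
          have htel : ∑ k ∈ Finset.range T, (D k - D (k+1)) = D 0 - D T := by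
            have := Finset.sum_range_sub' D T
            simpa using this
          rw [htel]
          have hb2 : ∑ k ∈ Finset.range T, D k ≤ T * (M * OPT) := by
            calc ∑ k ∈ Finset.range T, D k ≤ ∑ _k ∈ Finset.range T, M * OPT :=
                  Finset.sum_le_sum (fun k hk => hDM k (Finset.mem_range.mp hk))
              _ = T * (M * OPT) := by rw [Finset.sum_const, Finset.card_range]; ring
          nlinarith
  rw [hD0, hDT] at hsum
  -- final coefficient comparison
  have hcoef : (3/2) * (1 - ε) + 3 * ε * (T * M) ≤
      2 + 6 * ε / (1 - 3 * ε) + 6 * n * ε * (5 + 3 * ε) / (1 - 3 * ε) ^ 2 := by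
    have hAnn : (0:ℝ) ≤ 6 * ε / (1 - 3 * ε) := by positivity
    have hTn : (T:ℝ) ≤ (n:ℝ) := by exact_mod_cast hT
    have h2 : 3 * ε * ((T:ℝ) * M) ≤ 6 * n * ε * (5 + 3 * ε) / (1 - 3 * ε) ^ 2 := by
      rw [hMdef]
      have hrw : 3 * ε * ((T:ℝ) * ((5 + 3 * ε) / (1 - 3 * ε)))
          = (3 * ε * (T:ℝ) * (5 + 3 * ε)) / (1 - 3 * ε) := by ring
      rw [hrw, div_le_div_iff₀ h3 (by positivity)]
      have hq : (1 - 3 * ε) ^ 2 ≤ (1 - 3 * ε) := by nlinarith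
      have hxy : (T:ℝ) * (1 - 3 * ε) ^ 2 ≤ (n:ℝ) * (1 - 3 * ε) :=
        mul_le_mul hTn hq (by positivity) (Nat.cast_nonneg n)
      have hnn : (0:ℝ) ≤ 3 * ε * (5 + 3 * ε) * ((n:ℝ) * (1 - 3 * ε)) := by positivity
      nlinarith [mul_le_mul_of_nonneg_left hxy (show (0:ℝ) ≤ 3 * ε * (5 + 3 * ε) by positivity),
        hnn]
    linarith
  calc ∑ i, c i ≤ (3/2) * (1 - ε) * (OPT - 0) + 3 * ε * (T * (M * OPT)) := hsum
    _ = ((3/2) * (1 - ε) + 3 * ε * (T * M)) * OPT := by ring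
    _ ≤ (2 + 6 * ε / (1 - 3 * ε) + 6 * n * ε * (5 + 3 * ε) / (1 - 3 * ε) ^ 2) * OPT :=
        mul_le_mul_of_nonneg_right hcoef hOPT
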